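/- Let T be a tent map with slope a > 1 and let B ⊆ [0,1] be a compact set with T(B) = B such that T restricted to B is a homeomorphism. If the turning point c is not in B, then B is finite. -/

import Mathlib

/-- The tent map with slope `a`. -/
noncomputable def tent (a x : ℝ) : ℝ := min (a * x) (a * (1 - x))

lemma tent_left {a x : ℝ} (ha : 0 < a) (hx : x ≤ 1/2) : tent a x = a * x := by
  unfold tent
  exact min_eq_left (mul_le_mul_of_nonneg_left (by linarith) ha.le)

lemma tent_right {a x : ℝ} (ha : 0 < a) (hx : 1/2 ≤ x) : tent a x = a * (1 - x) := by
  unfold tent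
  exact min_eq_right (mul_le_mul_of_nonneg_left (by linarith) ha.le)

lemma tent_step {a x y : ℝ} (ha : 0 < a) (h : x ≤ 1/2 ↔ y ≤ 1/2) :
    |tent a x - tent a y| = a * |x - y| := by
  by_cases hx : x ≤ 1/2
  · rw [tent_left ha hx, tent_left ha (h.1 hx), ← mul_sub, abs_mul, abs_of_pos ha]
  · have hy : ¬ y ≤ 1/2 := fun hy => hx (h.2 hy)
    rw [tent_right ha (le_of_not_ge hx), tent_right ha (le_of_not_ge hy)]
    have : a * (1 - x) - a * (1 - y) = -(a * (x - y)) := by ring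
    rw [this, abs_neg, abs_mul, abs_of_pos ha]

lemma tent_iter_exp {a : ℝ} (ha : 0 < a) (n : ℕ) (x y : ℝ)
    (h : ∀ k < n, ((tent a)^[k] x ≤ 1/2 ↔ (tent a)^[k] y ≤ 1/2)) :
    |(tent a)^[n] x - (tent a)^[n] y| = a ^ n * |x - y| := by
  induction n with
  | zero => simp
  | succ n ih =>
    rw [Function.iterate_succ_apply', Function.iterate_succ_apply',
      tent_step ha (h n (Nat.lt_succ_self n)),
      ih (fun k hk => h k (hk.trans (Nat.lt_succ_self n))), pow_succ]
    ring

lemma tent_continuous (a : ℝ) : Continuous (tent a) :=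
  (continuous_const.mul continuous_id).min
    (continuous_const.mul (continuous_const.sub continuous_id))

/-- Itinerary word of length `m` for the tent map. -/
noncomputable def tword (a : ℝ) (m : ℕ) (x : ℝ) : Fin m → Bool :=
  fun k => @decide ((tent a)^[(k : ℕ)] x ≤ 1/2) (Classical.dec _)

/-- If `B ⊆ [0,1]` is compact, invariant (`T(B) = B`), the restriction of the tent map
`T = T_a` (slope `a > 1`) to `B` is a homeomorphism, and the turning point `c = 1/2`
does not belong to `B`, then `B` is finite. -/
theorem finite_of_homeo_restriction_not_mem_turning (a : ℝ) (ha : 1 < a)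
    (B : Set ℝ) (hB : B ⊆ Set.Icc 0 1) (hcomp : IsCompact B)
    (hinv : tent a '' B = B)
    (hhom : ∃ h : B ≃ₜ B, ∀ x : B, (h x : ℝ) = tent a x)
    (hc : (1 / 2 : ℝ) ∉ B) : B.Finite := by
  classical
  set T := tent a with hTdef
  have ha0 : 0 < a := lt_trans one_pos ha
  have hTmem : ∀ x ∈ B, T x ∈ B := by
    intro x hx
    rw [← hinv]
    exact Set.mem_image_of_mem _ hx
  have hTsurj : ∀ y ∈ B, ∃ x ∈ B, T x = y := by
    intro y hy
    rw [← hinv] at hy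
    exact hy
  have hTinj : ∀ x ∈ B, ∀ y ∈ B, T x = T y → x = y := by
    obtain ⟨h, hh⟩ := hhom
    intro x hx y hy hxy
    have he : h ⟨x, hx⟩ = h ⟨y, hy⟩ := Subtype.ext (by rw [hh, hh]; exact hxy)
    exact congrArg Subtype.val (h.injective he)
  have itermem : ∀ n : ℕ, ∀ x ∈ B, T^[n] x ∈ B := by
    intro n
    induction n with
    | zero => intro x hx; simpa using hx
    | succ n ih =>
      intro x hx
      rw [Function.iterate_succ_apply']
      exact hTmem _ (ih x hx)
  have habs1 : ∀ u ∈ B, ∀ v ∈ B, |u - v| ≤ 1 := by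
    intro u hu v hv
    have h1 := hB hu
    have h2 := hB hv
    rw [Set.mem_Icc] at h1 h2
    rw [abs_le]
    constructor <;> linarith
  have hbound : ∀ m : ℕ, ∀ x ∈ B, ∀ y ∈ B,
      (∀ k < m, (T^[k] x ≤ 1/2 ↔ T^[k] y ≤ 1/2)) → |x - y| ≤ (a ^ m)⁻¹ := by
    intro m x hx y hy hk
    have he := tent_iter_exp ha0 m x y hk
    have h1 : a ^ m * |x - y| ≤ 1 := by
      rw [← he]
      exact habs1 _ (itermem m x hx) _ (itermem m y hy)
    rw [← one_div, le_div_iff₀ (pow_pos ha0 m)]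
    linarith [h1]
  have hword : ∀ m : ℕ, ∀ x y : ℝ, tword a m x = tword a m y →
      ∀ k < m, (T^[k] x ≤ 1/2 ↔ T^[k] y ≤ 1/2) := by
    intro m x y he k hk
    have := congrFun he ⟨k, hk⟩
    exact decide_eq_decide.mp this
  -- the key sets of "opposite side pairs with close images"
  set K : ℕ → Set (ℝ × ℝ) := fun n =>
    {p | p.1 ∈ B ∧ p.2 ∈ B ∧ p.1 ≤ 1/2 ∧ 1/2 ≤ p.2 ∧ |T p.1 - T p.2| ≤ (a ^ n)⁻¹}
    with hKdef
  by_cases hK : ∀ n, (K n).Nonempty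
  · exfalso
    have hTcont : Continuous T := tent_continuous a
    have hKclosed : ∀ n, IsClosed (K n) := by
      intro n
      have h1 : IsClosed {p : ℝ × ℝ | p.1 ∈ B} := hcomp.isClosed.preimage continuous_fst
      have h2 : IsClosed {p : ℝ × ℝ | p.2 ∈ B} := hcomp.isClosed.preimage continuous_snd
      have h3 : IsClosed {p : ℝ × ℝ | p.1 ≤ 1/2} := isClosed_le continuous_fst continuous_const
      have h4 : IsClosed {p : ℝ × ℝ | 1/2 ≤ p.2} := isClosed_le continuous_const continuous_snd
      have h5 : IsClosed {p : ℝ × ℝ | |T p.1 - T p.2| ≤ (a ^ n)⁻¹} :=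
        isClosed_le ((hTcont.comp continuous_fst).sub (hTcont.comp continuous_snd)).abs
          continuous_const
      exact h1.inter (h2.inter (h3.inter (h4.inter h5)))
    have hKsub : ∀ n, K (n + 1) ⊆ K n := by
      intro n p hp
      refine ⟨hp.1, hp.2.1, hp.2.2.1, hp.2.2.2.1, le_trans hp.2.2.2.2 ?_⟩
      exact inv_anti₀ (pow_pos ha0 _) (pow_le_pow_right₀ ha.le (Nat.le_succ n))
    have hK0comp : IsCompact (K 0) := by
      refine (hcomp.prod hcomp).of_isClosed_subset (hKclosed 0) ?_
      intro p hp
      exact Set.mk_mem_prod hp.1 hp.2.1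
    obtain ⟨p, hp⟩ := IsCompact.nonempty_iInter_of_sequence_nonempty_isCompact_isClosed K
      hKsub hK hK0comp hKclosed
    rw [Set.mem_iInter] at hp
    have heq : T p.1 = T p.2 := by
      by_contra hne
      have hd : 0 < |T p.1 - T p.2| := abs_pos.2 (sub_ne_zero.2 hne)
      obtain ⟨n, hn⟩ := pow_unbounded_of_one_lt (|T p.1 - T p.2|)⁻¹ ha
      have h1 : (a ^ n)⁻¹ < |T p.1 - T p.2| := by
        rw [← inv_inv (|T p.1 - T p.2|)]
        exact inv_strictAnti₀ (inv_pos.2 hd) hn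
      have h2 := (hp n).2.2.2.2
      linarith
    have h12 : p.1 = p.2 := hTinj _ (hp 0).1 _ (hp 0).2.1 heq
    have hhalf : p.1 = 1/2 := le_antisymm (hp 0).2.2.1 (h12 ▸ (hp 0).2.2.2.1)
    exact hc (by rw [← hhalf] at *; simpa using (hp 0).1)
  · -- there is n₀ with no opposite-side pair with images (a^n₀)⁻¹-close
    rw [not_forall] at hK
    obtain ⟨n₀, hK0⟩ := hK
    by_contra hfin
    have hinf : B.Infinite := hfin
    set W : (m : ℕ) → Set (Fin m → Bool) := fun m => tword a m '' B with hWdef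
    have hWfin : ∀ m, (W m).Finite := fun m => Set.toFinite _
    -- shift map gives injection from W (m+1) into W m when n₀ ≤ m
    have hstep : ∀ m : ℕ, n₀ ≤ m → (W (m + 1)).ncard ≤ (W m).ncard := by
      intro m hm
      have hshift : ∀ x : ℝ, (fun k : Fin m => tword a (m + 1) x k.succ) = tword a m (T x) := by
        intro x
        funext k
        have : (T^[(k : ℕ)] (T x) ≤ 1/2) = (T^[((k.succ : Fin (m+1)) : ℕ)] x ≤ 1/2) := by
          rw [Fin.val_succ, Function.iterate_succ_apply]
        simp only [tword, ← hTdef, this]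
      apply Set.ncard_le_ncard_of_injOn
        (fun v : Fin (m + 1) → Bool => (fun k : Fin m => v k.succ)) ?_ ?_ (hWfin m)
      · rintro v ⟨x, hx, rfl⟩
        exact ⟨T x, hTmem x hx, (hshift x).symm⟩
      · rintro v ⟨x, hx, rfl⟩ v' ⟨x', hx', rfl⟩ hσ
        have hwords : tword a m (T x) = tword a m (T x') := by
          rw [← hshift x, ← hshift x']
          exact hσ
        have hTd : |T x - T x'| ≤ (a ^ n₀)⁻¹ := by
          refine le_trans (hbound m (T x) (hTmem x hx) (T x') (hTmem x' hx')
            (hword m (T x) (T x') hwords)) ?_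
          exact inv_anti₀ (pow_pos ha0 _) (pow_le_pow_right₀ ha.le hm)
        have hside : (x ≤ 1/2 ↔ x' ≤ 1/2) := by
          constructor
          · intro h1
            by_contra h2
            exact hK0 ⟨(x, x'), hx, hx', h1, le_of_not_ge h2, hTd⟩
          · intro h1
            by_contra h2
            exact hK0 ⟨(x', x), hx', hx, h1, le_of_not_ge h2, by rwa [abs_sub_comm]⟩
        funext k
        refine Fin.cases ?_ ?_ k
        · have h0 : (T^[((0 : Fin (m+1)) : ℕ)] x ≤ 1/2 ↔ T^[((0 : Fin (m+1)) : ℕ)] x' ≤ 1/2) := by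
            simpa using hside
          simp only [tword]
          exact decide_eq_decide.mpr h0
        · intro i
          have := congrFun hσ i
          simpa using this
    have hC : ∀ m : ℕ, n₀ ≤ m → (W m).ncard ≤ (W n₀).ncard := by
      intro m
      induction m with
      | zero =>
        intro hm
        have : n₀ = 0 := Nat.le_zero.mp hm
        rw [this]
      | succ m ih =>
        intro hm
        rcases Nat.lt_or_ge n₀ (m + 1) with h | h
        · have hm' : n₀ ≤ m := Nat.lt_succ_iff.mp h
          exact le_trans (hstep m hm') (ih hm')
        · have : m + 1 = n₀ := le_antisymm h hm
          rw [this]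
    obtain ⟨S, hSB, hSfin, hScard⟩ := hinf.exists_subset_ncard_eq ((W n₀).ncard + 1)
    have hex : ∀ d : ℝ, 0 < d → ∃ k : ℕ, (a ^ k)⁻¹ < d := by
      intro d hd
      obtain ⟨k, hk⟩ := pow_unbounded_of_one_lt d⁻¹ ha
      refine ⟨k, ?_⟩
      rw [← inv_inv d]
      exact inv_strictAnti₀ (inv_pos.2 hd) hk
    set pick : ℝ × ℝ → ℕ := fun p =>
      if h : 0 < |p.1 - p.2| then Classical.choose (hex _ h) else 0 with hpickdef
    set F := hSfin.toFinset with hFdef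
    set m := n₀ + (F ×ˢ F).sup pick with hmdef
    have hmn : n₀ ≤ m := Nat.le_add_right _ _
    have hinj : Set.InjOn (tword a m) S := by
      intro x hx y hy hwe
      by_contra hne
      have hd : 0 < |x - y| := abs_pos.2 (sub_ne_zero.2 hne)
      have hple : pick (x, y) ≤ m := by
        refine le_trans (Finset.le_sup (Finset.mem_product.mpr
          ⟨hSfin.mem_toFinset.mpr hx, hSfin.mem_toFinset.mpr hy⟩)) ?_
        exact Nat.le_add_left _ _
      have hpick : (a ^ pick (x, y))⁻¹ < |x - y| := by
        have h1 : pick (x, y) = Classical.choose (hex _ hd) := dif_pos hd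
        rw [h1]
        exact Classical.choose_spec (hex _ hd)
      have hlt : (a ^ m)⁻¹ < |x - y| :=
        lt_of_le_of_lt (inv_anti₀ (pow_pos ha0 _) (pow_le_pow_right₀ ha.le hple)) hpick
      have hle := hbound m x (hSB hx) y (hSB hy) (hword m x y hwe)
      linarith
    have himage : tword a m '' S ⊆ W m := Set.image_mono hSB
    have hfinal : (W n₀).ncard + 1 ≤ (W n₀).ncard := by
      calc (W n₀).ncard + 1 = S.ncard := hScard.symm
        _ = (tword a m '' S).ncard := (Set.ncard_image_of_injOn hinj).symm
        _ ≤ (W m).ncard := Set.ncard_le_ncard himage (hWfin m)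
        _ ≤ (W n₀).ncard := hC m hmn
    omega
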